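/- Let n ≥ 2 and let φ ∈ L^∞((0,∞)). Then for every ε > 0, ∫_0^1 φ(t) ∫_{{y ∈ ℝ^n : |y| < ε}} ∂^2/∂y_1^2 ( e^{-|y|^2/(4t)} / (2√(π t))^n ) dy dt = -M ∫_0^{1/ε^2} φ(s ε^2) e^{-1/(4s)} s^{-n/2 - 1} ds, where M = (2√π)^{-n} ∫_{{z̄ ∈ ℝ^{n-1} : |z̄| < 1}} √(1 - |z̄|^2) dz̄. -/

import Mathlib

open Real MeasureTheory Set
open scoped ENNReal

/-- The Gauss–Weierstrass kernel `e^{-|y|²/(4t)}/(2√(πt))^n` on `ℝ^n`. -/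
noncomputable def gaussKer (n : ℕ) (t : ℝ) (y : Fin n → ℝ) : ℝ :=
  Real.exp (-(∑ j, y j ^ 2) / (4 * t)) / (2 * Real.sqrt (π * t)) ^ n

/-- The second partial derivative `∂²/∂y₁²` of the Gauss–Weierstrass kernel. -/
noncomputable def d2GaussKer (n : ℕ) (hn : 0 < n) (t : ℝ) (y : Fin n → ℝ) : ℝ :=
  deriv (deriv (fun v : ℝ => gaussKer n t (Function.update y ⟨0, hn⟩ v))) (y ⟨0, hn⟩)

noncomputable def fS (n : ℕ) (t c v : ℝ) : ℝ :=
  Real.exp (-(v ^ 2 + c) / (4 * t)) / (2 * Real.sqrt (π * t)) ^ n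

noncomputable def f1 (n : ℕ) (t c v : ℝ) : ℝ :=
  Real.exp (-(v ^ 2 + c) / (4 * t)) * (-(2 * v) / (4 * t)) / (2 * Real.sqrt (π * t)) ^ n

noncomputable def f2 (n : ℕ) (t c v : ℝ) : ℝ :=
  Real.exp (-(v ^ 2 + c) / (4 * t)) *
    ((-(2 * v) / (4 * t)) ^ 2 + -2 / (4 * t)) / (2 * Real.sqrt (π * t)) ^ n

lemma hasDerivAt_inner (t c v : ℝ) :
    HasDerivAt (fun v : ℝ => -(v ^ 2 + c) / (4 * t)) (-(2 * v) / (4 * t)) v := by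
  have h : HasDerivAt (fun v : ℝ => -(v ^ 2 + c)) (-(2 * v)) v := by
    have := ((hasDerivAt_pow 2 v).add_const c).neg
    exact this.congr_deriv (by norm_num)
  simpa using h.div_const (4 * t)

lemma hasDerivAt_fS (n : ℕ) (t c v : ℝ) : HasDerivAt (fS n t c) (f1 n t c v) v :=
  ((hasDerivAt_inner t c v).exp).div_const ((2 * Real.sqrt (π * t)) ^ n)

lemma hasDerivAt_f1 (n : ℕ) (t c v : ℝ) : HasDerivAt (f1 n t c) (f2 n t c v) v := by
  have h1 : HasDerivAt (fun v : ℝ => Real.exp (-(v ^ 2 + c) / (4 * t)) * (-(2 * v) / (4 * t)))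
      (Real.exp (-(v ^ 2 + c) / (4 * t)) * ((-(2 * v) / (4 * t)) ^ 2 + -2 / (4 * t))) v := by
    have ha := (hasDerivAt_inner t c v).exp
    have hb : HasDerivAt (fun v : ℝ => -(2 * v) / (4 * t)) (-2 / (4 * t)) v := by
      have : HasDerivAt (fun v : ℝ => -(2 * v)) (-2) v := by
        exact ((hasDerivAt_id v).const_mul (2:ℝ)).neg.congr_deriv (by ring)
      simpa using this.div_const (4 * t)
    have := ha.mul hb
    exact this.congr_deriv (by ring)
  exact h1.div_const ((2 * Real.sqrt (π * t)) ^ n)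

lemma continuous_f2 (n : ℕ) (t c : ℝ) : Continuous (f2 n t c) := by
  unfold f2; fun_prop

lemma deriv_fS (n : ℕ) (t c : ℝ) : deriv (fS n t c) = f1 n t c :=
  funext fun v => (hasDerivAt_fS n t c v).deriv

lemma slice_eq (n : ℕ) (hn : 0 < n) (t : ℝ) (y : Fin n → ℝ) :
    (fun v : ℝ => gaussKer n t (Function.update y ⟨0, hn⟩ v)) =
      fS n t (∑ j ∈ Finset.univ.erase ⟨0, hn⟩, y j ^ 2) := by
  funext v
  unfold gaussKer fS
  congr 3
  have h : (fun j => Function.update y ⟨0, hn⟩ v j ^ 2) =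
      Function.update (fun j => y j ^ 2) ⟨0, hn⟩ (v ^ 2) :=
    funext fun j => Function.apply_update (fun _ x => x ^ 2) y ⟨0, hn⟩ v j
  rw [h, Finset.sum_update_of_mem (Finset.mem_univ _), Finset.sdiff_singleton_eq_erase]

lemma d2GaussKer_eq (n : ℕ) (hn : 0 < n) (t : ℝ) (y : Fin n → ℝ) :
    d2GaussKer n hn t y =
      f2 n t (∑ j ∈ Finset.univ.erase ⟨0, hn⟩, y j ^ 2) (y ⟨0, hn⟩) := by
  unfold d2GaussKer
  rw [slice_eq n hn t y, deriv_fS]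
  exact (hasDerivAt_f1 n t _ (y ⟨0, hn⟩)).deriv

lemma scale_int (m : ℕ) {ε : ℝ} (hε : 0 < ε) :
    ∫ z in {z : Fin (m + 1) → ℝ | ∑ j, z j ^ 2 < ε ^ 2}, Real.sqrt (ε ^ 2 - ∑ j, z j ^ 2)
      = ε ^ (m + 2) *
        ∫ z in {z : Fin (m + 1) → ℝ | ∑ j, z j ^ 2 < 1}, Real.sqrt (1 - ∑ j, z j ^ 2) := by
  have h1 : ∫ z in {z : Fin (m + 1) → ℝ | ∑ j, z j ^ 2 < ε ^ 2},
      Real.sqrt (ε ^ 2 - ∑ j, z j ^ 2) = ∫ z : Fin (m+1) → ℝ, Real.sqrt (ε ^ 2 - ∑ j, z j ^ 2) :=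
    setIntegral_eq_integral_of_forall_compl_eq_zero fun z hz => by
      simp only [mem_setOf_eq, not_lt] at hz
      exact Real.sqrt_eq_zero_of_nonpos (by linarith)
  have h2 : ∫ z in {z : Fin (m + 1) → ℝ | ∑ j, z j ^ 2 < 1},
      Real.sqrt (1 - ∑ j, z j ^ 2) = ∫ z : Fin (m+1) → ℝ, Real.sqrt (1 - ∑ j, z j ^ 2) :=
    setIntegral_eq_integral_of_forall_compl_eq_zero fun z hz => by
      simp only [mem_setOf_eq, not_lt] at hz
      exact Real.sqrt_eq_zero_of_nonpos (by linarith)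
  rw [h1, h2]
  have := MeasureTheory.Measure.integral_comp_smul (μ := (volume : Measure (Fin (m+1) → ℝ)))
    (fun z => Real.sqrt (ε ^ 2 - ∑ j, z j ^ 2)) ε
  have hfr : Module.finrank ℝ (Fin (m+1) → ℝ) = m + 1 := Module.finrank_fin_fun ℝ
  rw [hfr] at this
  have hcomp : (fun z : Fin (m+1) → ℝ => Real.sqrt (ε ^ 2 - ∑ j, (ε • z) j ^ 2)) =
      fun z => ε * Real.sqrt (1 - ∑ j, z j ^ 2) := by
    funext z
    have : ε ^ 2 - ∑ j, (ε • z) j ^ 2 = ε ^ 2 * (1 - ∑ j, z j ^ 2) := by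
      simp only [Pi.smul_apply, smul_eq_mul, mul_pow, ← Finset.mul_sum]
      ring
    rw [this, Real.sqrt_mul (sq_nonneg ε), Real.sqrt_sq hε.le]
  rw [hcomp] at this
  rw [integral_const_mul] at this
  have habs : |((ε ^ (m+1))⁻¹)| = (ε ^ (m+1))⁻¹ := abs_of_pos (by positivity)
  rw [habs, smul_eq_mul] at this
  have hne : (ε ^ (m+1)) ≠ 0 := by positivity
  field_simp at this ⊢
  rw [← this]; ring

lemma inner_integral (m : ℕ) (hn : 0 < m + 2) {t ε : ℝ} (ht : 0 < t) (hε : 0 < ε) :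
    ∫ y in {y : Fin (m + 2) → ℝ | Real.sqrt (∑ j, y j ^ 2) < ε},
        d2GaussKer (m + 2) hn t y
      = -(ε ^ (m + 2) * Real.exp (-ε ^ 2 / (4 * t)) /
            (t * (2 * Real.sqrt (π * t)) ^ (m + 2))) *
        ∫ z in {z : Fin (m + 1) → ℝ | ∑ j, z j ^ 2 < 1}, Real.sqrt (1 - ∑ j, z j ^ 2) := by
  have hsp : 0 < Real.sqrt (π * t) := Real.sqrt_pos.mpr (mul_pos pi_pos ht)
  have hC : (0:ℝ) < (2 * Real.sqrt (π * t)) ^ (m + 2) := by positivity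
  have hset : {y : Fin (m + 2) → ℝ | Real.sqrt (∑ j, y j ^ 2) < ε}
      = {y : Fin (m + 2) → ℝ | ∑ j, y j ^ 2 < ε ^ 2} := by
    ext y; exact Real.sqrt_lt' hε
  rw [hset]
  have hAmeas : MeasurableSet {y : Fin (m + 2) → ℝ | ∑ j, y j ^ 2 < ε ^ 2} := by
    apply measurableSet_lt _ measurable_const
    exact Finset.measurable_sum _ fun j _ => (measurable_pi_apply j).pow_const 2
  have hi0 : (⟨0, hn⟩ : Fin (m + 2)) = 0 := rfl
  set G : (Fin (m + 2) → ℝ) → ℝ := fun y =>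
    f2 (m + 2) t (∑ j ∈ Finset.univ.erase (0 : Fin (m + 2)), y j ^ 2) (y 0) with hG
  have hd2 : ∀ y : Fin (m + 2) → ℝ, d2GaussKer (m + 2) hn t y = G y := by
    intro y; rw [d2GaussKer_eq (m + 2) hn t y, hi0]
  have hGcont : Continuous G := by
    have hsum : Continuous (fun y : Fin (m + 2) → ℝ =>
        ∑ j ∈ Finset.univ.erase (0 : Fin (m + 2)), y j ^ 2) :=
      continuous_finset_sum _ fun j _ => (continuous_apply j).pow 2
    rw [hG]; unfold f2
    have h0 : Continuous fun y : Fin (m + 2) → ℝ => y 0 := continuous_apply 0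
    fun_prop
  have hKcomp : IsCompact (Set.pi (univ : Set (Fin (m + 2))) fun _ => Icc (-ε) ε) :=
    isCompact_univ_pi fun _ => isCompact_Icc
  have hsub : {y : Fin (m + 2) → ℝ | ∑ j, y j ^ 2 < ε ^ 2} ⊆
      Set.pi univ fun _ => Icc (-ε) ε := by
    intro y hy j _
    simp only [mem_setOf_eq] at hy
    have hle : y j ^ 2 ≤ ∑ i, y i ^ 2 :=
      Finset.single_le_sum (fun i _ => sq_nonneg (y i)) (Finset.mem_univ j)
    constructor <;> nlinarith
  have hGint : IntegrableOn G {y : Fin (m + 2) → ℝ | ∑ j, y j ^ 2 < ε ^ 2} :=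
    ((hGcont.continuousOn).integrableOn_compact hKcomp).mono_set hsub
  set e := MeasurableEquiv.piFinSuccAbove (fun _ : Fin (m + 2) => ℝ) 0 with he
  have hmp : MeasurePreserving e := volume_preserving_piFinSuccAbove (fun _ => ℝ) 0
  set T : Set (ℝ × (Fin (m + 1) → ℝ)) := {p | p.1 ^ 2 + ∑ j, p.2 j ^ 2 < ε ^ 2} with hT
  set D : ℝ × (Fin (m + 1) → ℝ) → ℝ := fun p => f2 (m + 2) t (∑ j, p.2 j ^ 2) p.1 with hD
  have hy0 : ∀ y : Fin (m + 2) → ℝ, (e y).1 = y 0 := fun y => rfl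
  have hy2 : ∀ (y : Fin (m + 2) → ℝ) (j : Fin (m + 1)),
      (e y).2 j = y (Fin.succAbove 0 j) := fun y j => rfl
  have hsum0 : ∀ y : Fin (m + 2) → ℝ,
      ∑ j, y j ^ 2 = y 0 ^ 2 + ∑ j, y (Fin.succAbove 0 j) ^ 2 := fun y =>
    Fin.sum_univ_succAbove (fun j => y j ^ 2) 0
  have herase : ∀ y : Fin (m + 2) → ℝ,
      ∑ j ∈ Finset.univ.erase (0 : Fin (m + 2)), y j ^ 2 =
        ∑ j, y (Fin.succAbove 0 j) ^ 2 := by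
    intro y
    have h2 : y 0 ^ 2 + ∑ j ∈ Finset.univ.erase (0 : Fin (m + 2)), y j ^ 2 = ∑ j, y j ^ 2 :=
      Finset.add_sum_erase Finset.univ (fun j => y j ^ 2) (Finset.mem_univ (0 : Fin (m + 2)))
    have h3 := hsum0 y
    linarith
  have key : ∀ y : Fin (m + 2) → ℝ,
      indicator {y : Fin (m + 2) → ℝ | ∑ j, y j ^ 2 < ε ^ 2} G y = indicator T D (e y) := by
    intro y
    have hmem : y ∈ {y : Fin (m + 2) → ℝ | ∑ j, y j ^ 2 < ε ^ 2} ↔ e y ∈ T := by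
      simp only [mem_setOf_eq, hT, hy0, hy2, ← hsum0]
    have hval : G y = D (e y) := by
      simp only [hG, hD, hy0, hy2, herase]
    by_cases hy : y ∈ {y : Fin (m + 2) → ℝ | ∑ j, y j ^ 2 < ε ^ 2}
    · rw [indicator_of_mem hy, indicator_of_mem (hmem.mp hy), hval]
    · rw [indicator_of_notMem hy, indicator_of_notMem (fun h => hy (hmem.mpr h))]
  have step1 : ∫ y in {y : Fin (m + 2) → ℝ | ∑ j, y j ^ 2 < ε ^ 2},
      d2GaussKer (m + 2) hn t y = ∫ p, indicator T D p := by
    calc ∫ y in {y : Fin (m + 2) → ℝ | ∑ j, y j ^ 2 < ε ^ 2}, d2GaussKer (m + 2) hn t y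
        = ∫ y in {y : Fin (m + 2) → ℝ | ∑ j, y j ^ 2 < ε ^ 2}, G y :=
          integral_congr_ae (Filter.Eventually.of_forall fun y => hd2 y)
      _ = ∫ y, indicator {y : Fin (m + 2) → ℝ | ∑ j, y j ^ 2 < ε ^ 2} G y :=
          (integral_indicator hAmeas).symm
      _ = ∫ y, indicator T D (e y) := by simp only [key]
      _ = ∫ p, indicator T D p := hmp.integral_comp e.measurableEmbedding _
  rw [step1]
  have hintT : Integrable (indicator T D) (volume : Measure (ℝ × (Fin (m + 1) → ℝ))) := by
    rw [← hmp.integrable_comp_emb e.measurableEmbedding]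
    have hco : (indicator T D) ∘ e =
        indicator {y : Fin (m + 2) → ℝ | ∑ j, y j ^ 2 < ε ^ 2} G :=
      funext fun y => (key y).symm
    rw [hco, integrable_indicator_iff hAmeas]
    exact hGint
  have hvol : (volume : Measure (ℝ × (Fin (m + 1) → ℝ))) =
      (volume : Measure ℝ).prod (volume : Measure (Fin (m + 1) → ℝ)) :=
    MeasureTheory.Measure.volume_eq_prod _ _
  have step2 : ∫ p, indicator T D p =
      ∫ z : Fin (m + 1) → ℝ, ∫ x : ℝ, indicator T D (x, z) := by
    rw [hvol] at hintT ⊢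
    exact MeasureTheory.integral_prod_symm _ hintT
  rw [step2]
  have slice : ∀ z : Fin (m + 1) → ℝ, (∫ x : ℝ, indicator T D (x, z)) =
      indicator {z : Fin (m + 1) → ℝ | ∑ j, z j ^ 2 < ε ^ 2}
        (fun z => -(Real.exp (-ε ^ 2 / (4 * t)) /
          (t * (2 * Real.sqrt (π * t)) ^ (m + 2))) * Real.sqrt (ε ^ 2 - ∑ j, z j ^ 2)) z := by
    intro z
    by_cases hlt : ∑ j, z j ^ 2 < ε ^ 2
    · rw [Set.indicator_of_mem
        (show z ∈ {z : Fin (m + 1) → ℝ | ∑ j, z j ^ 2 < ε ^ 2} from hlt)]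
      set c := ∑ j, z j ^ 2 with hc
      set a := Real.sqrt (ε ^ 2 - c) with ha
      have ha0 : 0 < a := Real.sqrt_pos.mpr (by linarith)
      have ha2 : a ^ 2 = ε ^ 2 - c := Real.sq_sqrt (by linarith)
      have hmemx : ∀ x : ℝ, ((x, z) ∈ T) ↔ x ∈ Ioo (-a) a := by
        intro x
        have h1 : (x, z) ∈ T ↔ x ^ 2 < ε ^ 2 - c := by
          simp only [hT, mem_setOf_eq, ← hc]
          constructor <;> intro <;> linarith
        rw [h1, ← Real.sqrt_lt_sqrt_iff (sq_nonneg x), Real.sqrt_sq_eq_abs, ← ha, mem_Ioo,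
          ← abs_lt]
      have hfun : (fun x : ℝ => indicator T D (x, z)) =
          indicator (Ioo (-a) a) (f2 (m + 2) t c) := by
        funext x
        by_cases hx : (x, z) ∈ T
        · rw [indicator_of_mem hx, indicator_of_mem ((hmemx x).mp hx)]
        · rw [indicator_of_notMem hx, indicator_of_notMem (fun h => hx ((hmemx x).mpr h))]
      rw [hfun, integral_indicator measurableSet_Ioo]
      have hIoo : ∫ x in Ioo (-a) a, f2 (m + 2) t c x = ∫ x in (-a)..a, f2 (m + 2) t c x := by
        rw [intervalIntegral.integral_of_le (by linarith), integral_Ioc_eq_integral_Ioo]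
      rw [hIoo, intervalIntegral.integral_eq_sub_of_hasDerivAt
        (fun x _ => hasDerivAt_f1 (m + 2) t c x)
        ((continuous_f2 (m + 2) t c).intervalIntegrable _ _)]
      unfold f1
      rw [show ((-a) ^ 2 : ℝ) = a ^ 2 by ring,
        show -(a ^ 2 + c) = -ε ^ 2 by linarith]
      field_simp
      ring
    · have hfun : (fun x : ℝ => indicator T D (x, z)) = fun _ => (0 : ℝ) := by
        funext x
        apply indicator_of_notMem
        simp only [hT, mem_setOf_eq, not_lt] at hlt ⊢
        nlinarith [sq_nonneg x]
      rw [hfun, Set.indicator_of_notMem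
        (show z ∉ {z : Fin (m + 1) → ℝ | ∑ j, z j ^ 2 < ε ^ 2} from hlt)]
      exact integral_zero _ _
  simp only [slice]
  have hZmeas : MeasurableSet {z : Fin (m + 1) → ℝ | ∑ j, z j ^ 2 < ε ^ 2} := by
    apply measurableSet_lt _ measurable_const
    exact Finset.measurable_sum _ fun j _ => (measurable_pi_apply j).pow_const 2
  rw [integral_indicator hZmeas, integral_const_mul, scale_int m hε]
  ring

lemma rpow_eq_aux (k : ℕ) {s : ℝ} (hs : 0 < s) :
    s ^ (-(k : ℝ) / 2 - 1) = ((Real.sqrt s) ^ k * s)⁻¹ := by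
  have h1 : (Real.sqrt s) ^ k * s = s ^ ((k : ℝ) / 2 + 1) := by
    rw [Real.rpow_add hs, Real.rpow_one]
    congr 1
    rw [Real.sqrt_eq_rpow, ← Real.rpow_natCast (s ^ ((1:ℝ)/2)) k, ← Real.rpow_mul hs.le]
    congr 1
    ring
  have h2 : -(k:ℝ)/2 - 1 = -((k:ℝ)/2 + 1) := by ring
  rw [h2, Real.rpow_neg hs.le, h1]

lemma subst_time (ψ : ℝ → ℝ) {ε : ℝ} (hε : 0 < ε) :
    ∫ t in Ioc (0:ℝ) 1, ψ t = ε ^ 2 * ∫ s in Ioc (0:ℝ) (1 / ε ^ 2), ψ (s * ε ^ 2) := by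
  have hc : (ε ^ 2 : ℝ) ≠ 0 := by positivity
  have h := intervalIntegral.integral_comp_mul_right (a := (0:ℝ)) (b := 1 / ε ^ 2) ψ hc
  rw [zero_mul, one_div, inv_mul_cancel₀ hc] at h
  rw [intervalIntegral.integral_of_le (by positivity : (0:ℝ) ≤ (ε ^ 2)⁻¹),
    intervalIntegral.integral_of_le (by norm_num : (0:ℝ) ≤ 1), smul_eq_mul] at h
  rw [one_div]
  rw [h]
  field_simp


/-- `α(ε) = ∫_0^1 φ(t) ∫_{|y|<ε} ∂²/∂y₁² (e^{-|y|²/(4t)}/(2√(πt))^n) dy dt`. -/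
noncomputable def alphaFun (n : ℕ) (hn : 0 < n) (φ : ℝ → ℝ) (ε : ℝ) : ℝ :=
  ∫ t in Ioc (0 : ℝ) 1, φ t *
    ∫ y in {y : Fin n → ℝ | Real.sqrt (∑ j, y j ^ 2) < ε}, d2GaussKer n hn t y

/-- The constant `M = (2√π)^{-n} ∫_{|z̄|<1, z̄ ∈ ℝ^{n-1}} √(1-|z̄|²) dz̄`. -/
noncomputable def Mconst (n : ℕ) : ℝ :=
  ((2 * Real.sqrt π) ^ n)⁻¹ *
    ∫ z in {z : Fin (n - 1) → ℝ | ∑ j, z j ^ 2 < 1}, Real.sqrt (1 - ∑ j, z j ^ 2)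

/-- For `n ≥ 2` and `φ ∈ L^∞((0,∞))`:
`α(ε) = -M ∫_0^{1/ε²} φ(sε²) e^{-1/(4s)} s^{-n/2-1} ds` for every `ε > 0`. -/
theorem alphaFun_eq (n : ℕ) (hn : 2 ≤ n) (φ : ℝ → ℝ)
    (hφ : MemLp φ ⊤ (volume.restrict (Ioi (0 : ℝ)))) :
    ∀ ε : ℝ, 0 < ε →
      alphaFun n (by omega) φ ε =
        -Mconst n * ∫ s in Ioc (0 : ℝ) (1 / ε ^ 2),
          φ (s * ε ^ 2) * Real.exp (-1 / (4 * s)) * s ^ (-(n : ℝ) / 2 - 1) := by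
  intro ε hε
  obtain ⟨m, rfl⟩ : ∃ m, n = m + 2 := ⟨n - 2, by omega⟩
  have hsp : 0 < Real.sqrt π := Real.sqrt_pos.mpr pi_pos
  have hεne : ε ≠ 0 := ne_of_gt hε
  have hM : Mconst (m + 2) = ((2 * Real.sqrt π) ^ (m + 2))⁻¹ *
      ∫ z in {z : Fin (m + 1) → ℝ | ∑ j, z j ^ 2 < 1}, Real.sqrt (1 - ∑ j, z j ^ 2) := rfl
  unfold alphaFun
  rw [show (∫ t in Ioc (0 : ℝ) 1, φ t *
        ∫ y in {y : Fin (m + 2) → ℝ | Real.sqrt (∑ j, y j ^ 2) < ε},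
          d2GaussKer (m + 2) (by omega) t y) =
      ∫ t in Ioc (0 : ℝ) 1,
        (-(ε ^ (m + 2) *
            (∫ z in {z : Fin (m + 1) → ℝ | ∑ j, z j ^ 2 < 1},
              Real.sqrt (1 - ∑ j, z j ^ 2)) * ((2 * Real.sqrt π) ^ (m + 2))⁻¹)) *
          (φ t * (Real.exp (-ε ^ 2 / (4 * t)) * ((Real.sqrt t) ^ (m + 2) * t)⁻¹)) from ?_]
  · rw [integral_const_mul,
      subst_time (fun t => φ t *
        (Real.exp (-ε ^ 2 / (4 * t)) * ((Real.sqrt t) ^ (m + 2) * t)⁻¹)) hε]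
    rw [show (∫ s in Ioc (0:ℝ) (1 / ε ^ 2),
          (fun t => φ t * (Real.exp (-ε ^ 2 / (4 * t)) *
            ((Real.sqrt t) ^ (m + 2) * t)⁻¹)) (s * ε ^ 2)) =
        ∫ s in Ioc (0:ℝ) (1 / ε ^ 2),
          (ε ^ (m + 4))⁻¹ * (φ (s * ε ^ 2) * Real.exp (-1 / (4 * s)) *
            s ^ (-((m + 2 : ℕ) : ℝ) / 2 - 1)) from ?_]
    · rw [integral_const_mul, hM]
      push_cast
      field_simp
      ring
    · apply setIntegral_congr_fun measurableSet_Ioc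
      intro s hs
      obtain ⟨hs0, _⟩ := hs
      have hsq : Real.sqrt (s * ε ^ 2) = Real.sqrt s * ε := by
        rw [Real.sqrt_mul hs0.le, Real.sqrt_sq hε.le]
      simp only
      rw [rpow_eq_aux (m + 2) hs0, hsq,
        show -ε ^ 2 / (4 * (s * ε ^ 2)) = -1 / (4 * s) from by
          rw [div_eq_div_iff (by positivity) (by positivity)]; ring,
        mul_pow,
        show Real.sqrt s ^ (m + 2) * ε ^ (m + 2) * (s * ε ^ 2) =
          ε ^ (m + 4) * (Real.sqrt s ^ (m + 2) * s) from by ring,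
        mul_inv]
      ring
  · apply setIntegral_congr_fun measurableSet_Ioc
    intro t ht
    obtain ⟨ht0, _⟩ := ht
    simp only
    rw [inner_integral m (by omega) ht0 hε]
    have hst : Real.sqrt (π * t) = Real.sqrt π * Real.sqrt t := Real.sqrt_mul pi_pos.le t
    have hstp : 0 < Real.sqrt t := Real.sqrt_pos.mpr ht0
    rw [hst]
    field_simp
    ring
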